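/- For α1, α2 ∈ (0,π) and φ ∈ (0,π), the plane {x ∈ ℝ³ : n·x = d} with n and d as above intersects the unit sphere S² ⊂ ℝ³ in a circle of positive radius, and the point P1 = (cos φ, sin φ, 0) lies on this intersection. -/

import Mathlib

open Real
open scoped RealInnerProductSpace

noncomputable def vec3 (a b c : ℝ) : EuclideanSpace ℝ (Fin 3) :=
  (WithLp.equiv 2 (Fin 3 → ℝ)).symm ![a, b, c]

lemma inner_vec3_left (a b c : ℝ) (x : EuclideanSpace ℝ (Fin 3)) :
    ⟪vec3 a b c, x⟫ = a * x 0 + b * x 1 + c * x 2 := by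
  simp [vec3, PiLp.inner_apply, Fin.sum_univ_three, RCLike.inner_apply]
  ring

set_option maxHeartbeats 800000 in
theorem stmt9 (α₁ α₂ φ : ℝ) (hα₁ : α₁ ∈ Set.Ioo 0 π) (hα₂ : α₂ ∈ Set.Ioo 0 π)
    (hφ : φ ∈ Set.Ioo 0 π)
    (n : EuclideanSpace ℝ (Fin 3)) (d : ℝ)
    (hn : n = vec3 (sin α₁ * cos α₂ * cos φ + cos α₁ * sin α₂)
        (sin α₁ * cos α₂ * sin φ) (- (sin α₁ * sin α₂ * sin φ)))
    (hd : d = sin α₁ * cos α₂ + cos α₁ * sin α₂ * cos φ) :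
    ∃ (center : EuclideanSpace ℝ (Fin 3)) (r : ℝ), 0 < r ∧
      ⟪n, center⟫ = d ∧
      ({x : EuclideanSpace ℝ (Fin 3) | ⟪n, x⟫ = d ∧ ‖x‖ = 1} =
        {x : EuclideanSpace ℝ (Fin 3) | ⟪n, x⟫ = d ∧ dist x center = r}) ∧
      (⟪n, vec3 (cos φ) (sin φ) 0⟫ = d ∧ ‖vec3 (cos φ) (sin φ) 0‖ = 1) := by
  obtain ⟨h2a, h2b⟩ := hα₂
  obtain ⟨h3a, h3b⟩ := hφ
  have hs2 : 0 < sin α₂ := Real.sin_pos_of_pos_of_lt_pi h2a h2b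
  have hsφ : 0 < sin φ := Real.sin_pos_of_pos_of_lt_pi h3a h3b
  have p1 := sin_sq_add_cos_sq α₁
  have p2 := sin_sq_add_cos_sq α₂
  have pφ := sin_sq_add_cos_sq φ
  set s : ℝ := sin φ ^ 2 * sin α₂ ^ 2 with hs
  have hspos : 0 < s := by positivity
  -- norm of n squared
  have hK : ‖n‖ ^ 2 = d ^ 2 + s := by
    rw [← real_inner_self_eq_norm_sq, hn, inner_vec3_left]
    simp only [vec3, WithLp.equiv_symm_apply, PiLp.toLp_apply, Matrix.cons_val_zero, Matrix.cons_val_one,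
      Matrix.head_cons, Matrix.cons_val_two, Matrix.tail_cons]
    rw [hd, hs]
    linear_combination (sin α₁ ^ 2 * cos α₂ ^ 2 - cos α₁ ^ 2 * sin α₂ ^ 2) * pφ + (sin φ ^ 2 * sin α₂ ^ 2) * p1
  set K : ℝ := ‖n‖ ^ 2 with hKdef
  have hKpos : 0 < K := by nlinarith
  refine ⟨(d / K) • n, Real.sqrt (s / K), Real.sqrt_pos.2 (by positivity), ?_, ?_, ?_, ?_⟩
  · rw [real_inner_smul_right, real_inner_self_eq_norm_sq, ← hKdef]
    field_simp
  · ext x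
    simp only [Set.mem_setOf_eq, and_congr_right_iff]
    intro hplane
    have hdist : dist x ((d / K) • n) ^ 2 = ‖x‖ ^ 2 - d ^ 2 / K := by
      rw [dist_eq_norm, norm_sub_sq_real, real_inner_smul_right, real_inner_comm, hplane,
        norm_smul, mul_pow, ← hKdef]
      have : ‖(d / K : ℝ)‖ ^ 2 = d ^ 2 / K ^ 2 := by
        rw [Real.norm_eq_abs, sq_abs]; ring
      rw [this]
      field_simp
      ring
    constructor
    · intro hx
      have h1 : dist x ((d / K) • n) ^ 2 = s / K := by
        rw [hdist, hx]
        field_simp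
        nlinarith
      rw [← h1, Real.sqrt_sq dist_nonneg]
    · intro hx
      have h1 : ‖x‖ ^ 2 = 1 := by
        have := hdist
        rw [hx, Real.sq_sqrt (by positivity : (0:ℝ) ≤ s / K)] at this
        field_simp at this
        nlinarith
      nlinarith [norm_nonneg x, h1]
  · rw [hn, inner_vec3_left]
    simp only [vec3, WithLp.equiv_symm_apply, PiLp.toLp_apply, Matrix.cons_val_zero, Matrix.cons_val_one,
      Matrix.head_cons, Matrix.cons_val_two, Matrix.tail_cons]
    rw [hd]
    linear_combination (sin α₁ * cos α₂) * pφ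
  · rw [← Real.sqrt_one, ← pφ]
    rw [show (‖vec3 (cos φ) (sin φ) 0‖ : ℝ) = Real.sqrt (‖vec3 (cos φ) (sin φ) 0‖ ^ 2) from
      (Real.sqrt_sq (norm_nonneg _)).symm]
    congr 1
    rw [← real_inner_self_eq_norm_sq, inner_vec3_left]
    simp only [vec3, WithLp.equiv_symm_apply, PiLp.toLp_apply, Matrix.cons_val_zero, Matrix.cons_val_one,
      Matrix.head_cons, Matrix.cons_val_two, Matrix.tail_cons]
    ring
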